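/- Let n ≥ 1, α_i > 0, d_i > 0, u̲_i > 0 for i = 1,…,n. Define λ_2 = min_i(α_i d_i u̲_i), η = λ_2 / max_i d_i, and λ_1 = η · min_i d_i. Define P_η = {u ∈ [0,∞)^n : Σ α_i u_i ≤ η}, Q_λ = {u ∈ [0,∞)^n : Σ α_i d_i u_i ≤ λ}, and R̲ = {u ∈ [0,∞)^n : Σ u_i/u̲_i ≤ 1}. Then the inclusions Q_{λ_1} ⊆ P_η ⊆ Q_{λ_2} ⊆ R̲ hold. -/

import Mathlib

/-- The N-barrier construction for the lower bound in the NBMP: the nested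
inclusions `Q_{lam1} ⊆ P_η ⊆ Q_{lam2} ⊆ R̲`. -/
theorem nbarrier_lower (n : ℕ) (α d ulow : Fin (n + 1) → ℝ)
    (hα : ∀ i, 0 < α i) (hd : ∀ i, 0 < d i) (hu : ∀ i, 0 < ulow i) :
    let lam2 : ℝ := Finset.univ.inf' Finset.univ_nonempty (fun i => α i * d i * ulow i)
    let η : ℝ := lam2 / Finset.univ.sup' Finset.univ_nonempty d
    let lam1 : ℝ := η * Finset.univ.inf' Finset.univ_nonempty d
    ({v : Fin (n + 1) → ℝ | (∀ j, 0 ≤ v j) ∧ (∑ i, α i * d i * v i) ≤ lam1} ⊆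
      {v : Fin (n + 1) → ℝ | (∀ j, 0 ≤ v j) ∧ (∑ i, α i * v i) ≤ η}) ∧
    ({v : Fin (n + 1) → ℝ | (∀ j, 0 ≤ v j) ∧ (∑ i, α i * v i) ≤ η} ⊆
      {v : Fin (n + 1) → ℝ | (∀ j, 0 ≤ v j) ∧ (∑ i, α i * d i * v i) ≤ lam2}) ∧
    ({v : Fin (n + 1) → ℝ | (∀ j, 0 ≤ v j) ∧ (∑ i, α i * d i * v i) ≤ lam2} ⊆
      {v : Fin (n + 1) → ℝ | (∀ j, 0 ≤ v j) ∧ (∑ i, v i / ulow i) ≤ 1}) := by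
  intro lam2 η lam1
  have hdmin : 0 < Finset.univ.inf' Finset.univ_nonempty d := by
    obtain ⟨i, _, hi⟩ := Finset.exists_mem_eq_inf' Finset.univ_nonempty d
    rw [hi]; exact hd i
  have hdmax : 0 < Finset.univ.sup' Finset.univ_nonempty d := by
    obtain ⟨i, _, hi⟩ := Finset.exists_mem_eq_sup' Finset.univ_nonempty d
    rw [hi]; exact hd i
  have hlam2 : 0 < lam2 := by
    obtain ⟨i, _, hi⟩ := Finset.exists_mem_eq_inf' Finset.univ_nonempty
      (fun i => α i * d i * ulow i)
    rw [show lam2 = α i * d i * ulow i from hi]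
    exact mul_pos (mul_pos (hα i) (hd i)) (hu i)
  have hdminle : ∀ i, Finset.univ.inf' Finset.univ_nonempty d ≤ d i := fun i =>
    Finset.inf'_le _ (Finset.mem_univ i)
  have hdmaxge : ∀ i, d i ≤ Finset.univ.sup' Finset.univ_nonempty d := fun i =>
    Finset.le_sup' _ (Finset.mem_univ i)
  have hlam2le : ∀ i, lam2 ≤ α i * d i * ulow i := fun i =>
    Finset.inf'_le _ (Finset.mem_univ i)
  refine ⟨?_, ?_, ?_⟩
  · rintro v ⟨hv, hsum⟩
    refine ⟨hv, ?_⟩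
    have key : (Finset.univ.inf' Finset.univ_nonempty d) * ∑ i, α i * v i ≤
        ∑ i, α i * d i * v i := by
      rw [Finset.mul_sum]
      refine Finset.sum_le_sum fun i _ => ?_
      have := mul_le_mul_of_nonneg_right (hdminle i)
        (mul_nonneg (hα i).le (hv i))
      nlinarith [this]
    have h2 : (Finset.univ.inf' Finset.univ_nonempty d) * ∑ i, α i * v i ≤
        (Finset.univ.inf' Finset.univ_nonempty d) * η := by
      calc _ ≤ ∑ i, α i * d i * v i := key
        _ ≤ lam1 := hsum
        _ = _ := mul_comm _ _
    exact le_of_mul_le_mul_left h2 hdmin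
  · rintro v ⟨hv, hsum⟩
    refine ⟨hv, ?_⟩
    have key : ∑ i, α i * d i * v i ≤
        (Finset.univ.sup' Finset.univ_nonempty d) * ∑ i, α i * v i := by
      rw [Finset.mul_sum]
      refine Finset.sum_le_sum fun i _ => ?_
      have := mul_le_mul_of_nonneg_right (hdmaxge i)
        (mul_nonneg (hα i).le (hv i))
      nlinarith [this]
    calc ∑ i, α i * d i * v i ≤ _ := key
      _ ≤ (Finset.univ.sup' Finset.univ_nonempty d) * η :=
        mul_le_mul_of_nonneg_left hsum hdmax.le
      _ = lam2 := by show _ * (lam2 / _) = lam2; field_simp [hdmax.ne']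
  · rintro v ⟨hv, hsum⟩
    refine ⟨hv, ?_⟩
    have key : ∑ i, v i / ulow i ≤ (∑ i, α i * d i * v i) / lam2 := by
      rw [Finset.sum_div]
      refine Finset.sum_le_sum fun i _ => ?_
      rw [div_le_div_iff₀ (hu i) hlam2]
      have := mul_le_mul_of_nonneg_left (hlam2le i) (hv i)
      nlinarith [this]
    calc ∑ i, v i / ulow i ≤ (∑ i, α i * d i * v i) / lam2 := key
      _ ≤ lam2 / lam2 := by gcongr
      _ = 1 := div_self hlam2.ne'
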